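/- Let A be an abelian group of bounded exponent N ≥ 1 (N·a = 0 for all a ∈ A). Let {m_i}_{i∈I} be a family of elements of the free abelian group M = ⊕_{j∈J} ℤ·x_j such that for every prime p dividing N, the images of the m_i in M/pM are linearly independent over ℤ/p. Then for any family {a_i}_{i∈I} in A there exists a group homomorphism f : M → A with f(m_i) = a_i for all i. -/

import Mathlib

/-- Reduction modulo `q` of an element of the free abelian group `J →₀ ℤ`. -/
noncomputable def modRed (q : ℕ) {J : Type*} (v : J →₀ ℤ) : J →₀ ZMod q :=
  Finsupp.mapRange (Int.cast : ℤ → ZMod q) (by simp) v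

/-- `modRed` as an additive monoid hom. -/
noncomputable def modRedHom (q : ℕ) (J : Type*) : (J →₀ ℤ) →+ (J →₀ ZMod q) :=
  Finsupp.mapRange.addMonoidHom (Int.castAddHom (ZMod q))

theorem modRedHom_apply (q : ℕ) {J : Type*} (v : J →₀ ℤ) :
    modRedHom q J v = modRed q v := rfl

/-- An opaque wrapper around `QuotientAddGroup.zmodModule` (the `abbrev` unfolds too
eagerly for typeclass search). -/
noncomputable def quotZModModule (p : ℕ) {A : Type*} [AddCommGroup A] {H : AddSubgroup A}
    (hH : ∀ x : A, p • x ∈ H) : Module (ZMod p) (A ⧸ H) :=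
  QuotientAddGroup.zmodModule hH

theorem modRed_single (q : ℕ) {J : Type*} (j : J) (n : ℤ) :
    modRed q (Finsupp.single j n) = Finsupp.single j (n : ZMod q) :=
  Finsupp.mapRange_single

/-- Prescribing values of a linear map on a linearly independent family over a field. -/
theorem exists_linearMap_of_linearIndependent {K : Type*} [Field K]
    {V W ι : Type*} [AddCommGroup V] [Module K V] [AddCommGroup W] [Module K W]
    {v : ι → V} (hv : LinearIndependent K v) (w : ι → W) :
    ∃ L : V →ₗ[K] W, ∀ i, L (v i) = w i := by
  obtain ⟨T, hT⟩ := Submodule.exists_isCompl (Submodule.span K (Set.range v))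
  refine ⟨((Finsupp.linearCombination K w).comp hv.repr).comp
      (Submodule.linearProjOfIsCompl _ _ hT), fun i => ?_⟩
  have hx : v i ∈ Submodule.span K (Set.range v) := Submodule.subset_span ⟨i, rfl⟩
  have h1 : (Submodule.linearProjOfIsCompl _ _ hT) (v i) = ⟨v i, hx⟩ :=
    Submodule.linearProjOfIsCompl_apply_left hT ⟨v i, hx⟩
  simp only [LinearMap.comp_apply, h1, hv.repr_eq_single i ⟨v i, hx⟩ rfl]
  simp

universe u v w

theorem nonsingular_solvable_aux : ∀ (N : ℕ), 1 ≤ N →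
    ∀ {A : Type u} [AddCommGroup A], (∀ a : A, N • a = 0) →
    ∀ {I : Type v} {J : Type w} (m : I → (J →₀ ℤ)),
      (∀ p : ℕ, p.Prime → p ∣ N →
        LinearIndependent (ZMod p) (fun i => modRed p (m i))) →
      ∀ a : I → A, ∃ f : (J →₀ ℤ) →+ A, ∀ i, f (m i) = a i := by
  intro N
  induction N using Nat.strong_induction_on with
  | _ N IH =>
    intro hN A _ hA I J m hli a
    rcases eq_or_lt_of_le hN with h1 | h1
    · -- N = 1 : the group is trivial
      refine ⟨0, fun i => ?_⟩
      have h := hA (a i)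
      rw [← h1, one_nsmul] at h
      simpa using h.symm
    · -- N ≥ 2
      set p := N.minFac with hpdef
      have hpp : p.Prime := Nat.minFac_prime (by omega)
      have hpd : p ∣ N := Nat.minFac_dvd N
      set N' := N / p with hN'def
      have hNeq : p * N' = N := Nat.mul_div_cancel' hpd
      have hN'pos : 1 ≤ N' :=
        Nat.pos_of_ne_zero (by intro h0; rw [h0, mul_zero] at hNeq; omega)
      have hN'lt : N' < N := Nat.div_lt_self (by omega) hpp.one_lt
      haveI : Fact p.Prime := ⟨hpp⟩
      -- the subgroup p•A
      let σ : A →+ A := AddMonoidHom.mk' (fun x => p • x) (fun x y => smul_add p x y)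
      set H : AddSubgroup A := σ.range with hHdef
      have hHmem : ∀ x : A, p • x ∈ H := fun x => ⟨x, rfl⟩
      letI : Module (ZMod p) (A ⧸ H) := quotZModModule p hHmem
      -- a linear map prescribing values on the reductions mod p
      obtain ⟨L, hL⟩ := exists_linearMap_of_linearIndependent (hli p hpp hpd)
        (fun i => (QuotientAddGroup.mk (a i) : A ⧸ H))
      -- lift to a hom `f₁ : (J →₀ ℤ) →+ A`
      have hsur : ∀ j : J, ∃ b : A,
          (QuotientAddGroup.mk b : A ⧸ H) = L (Finsupp.single j 1) := fun j =>
        Quotient.exists_rep _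
      choose b hb using hsur
      let f₁ : (J →₀ ℤ) →+ A := (Finsupp.linearCombination ℤ b).toAddMonoidHom
      have hf₁single : ∀ (j : J) (n : ℤ), f₁ (Finsupp.single j n) = n • b j := by
        intro j n
        simp [f₁, Finsupp.linearCombination_single]
      have key : (QuotientAddGroup.mk' H).comp f₁
          = L.toAddMonoidHom.comp (modRedHom p J) := by
        apply Finsupp.addHom_ext
        intro j n
        have h2 : (Finsupp.single j ((n : ℤ) : ZMod p) : J →₀ ZMod p)
            = n • Finsupp.single j (1 : ZMod p) := by
          rw [Finsupp.smul_single]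
          congr 1
          simp
        show QuotientAddGroup.mk (f₁ (Finsupp.single j n))
            = L (modRedHom p J (Finsupp.single j n))
        rw [hf₁single, modRedHom_apply, modRed_single, h2, map_zsmul, ← hb j,
          ← QuotientAddGroup.mk_zsmul]
      have keyfun : ∀ x : J →₀ ℤ,
          (QuotientAddGroup.mk (f₁ x) : A ⧸ H) = L (modRed p x) := by
        intro x
        have := congrArg (fun g => g x) key
        simpa [modRedHom, modRed] using this
      have h_mem : ∀ i, a i - f₁ (m i) ∈ H := by
        intro i
        have : (QuotientAddGroup.mk (a i - f₁ (m i)) : A ⧸ H) = 0 := by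
          rw [QuotientAddGroup.mk_sub, keyfun, hL, sub_self]
        exact (QuotientAddGroup.eq_zero_iff _).mp this
      -- apply the induction hypothesis inside `H`
      have hA' : ∀ x : H, N' • x = 0 := by
        rintro ⟨x, c, rfl⟩
        apply Subtype.ext
        have : N' • ((⟨σ c, ⟨c, rfl⟩⟩ : H) : A) = N' • (p • c) := rfl
        push_cast
        show N' • (p • c) = 0
        rw [← mul_nsmul, mul_comm, Nat.mul_comm N' p, hNeq]
        exact hA c
      have hli' : ∀ q : ℕ, q.Prime → q ∣ N' →
          LinearIndependent (ZMod q) (fun i => modRed q (m i)) := fun q hq hqd =>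
        hli q hq (hqd.trans (Nat.div_dvd_of_dvd hpd))
      obtain ⟨f₂, hf₂⟩ := IH N' hN'lt hN'pos hA' m hli'
        (fun i => (⟨a i - f₁ (m i), h_mem i⟩ : H))
      refine ⟨f₁ + H.subtype.comp f₂, fun i => ?_⟩
      simp only [AddMonoidHom.add_apply, AddMonoidHom.comp_apply, hf₂ i,
        AddSubgroup.coe_subtype]
      exact add_sub_cancel _ _

/-- Every system of equations over an abelian group of bounded period `N`
which is p-nonsingular for all primes `p ∣ N` is solvable in the group itself. -/
theorem nonsingular_solvable_bounded_exponent (N : ℕ) (hN : 1 ≤ N)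
    {A : Type*} [AddCommGroup A] (hA : ∀ a : A, N • a = 0)
    {I J : Type*} (m : I → (J →₀ ℤ))
    (hli : ∀ p : ℕ, p.Prime → p ∣ N →
      LinearIndependent (ZMod p) (fun i => modRed p (m i)))
    (a : I → A) :
    ∃ f : (J →₀ ℤ) →+ A, ∀ i, f (m i) = a i :=
  nonsingular_solvable_aux N hN hA m hli a
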